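/- For z ∈ ℂ with |z| ≤ R set ρ(z) = R − |z|. (i) For all real numbers 0 < γ̃ < γ there exists a constant C > 0, depending only on γ and γ̃, such that for every R > 0 and every z with |z| ≤ R one has e^{−γ·ρ(z)} ≤ C · I₀(γ̃·|z|)/I₀(γ̃·R). (ii) For all real numbers 0 < γ < γ̃ there exists a constant C' > 0, depending only on γ and γ̃, such that for every R > 0 and every z with |z| ≤ R one has I₀(γ̃·|z|)/I₀(γ̃·R) ≤ C' · e^{−γ·ρ(z)}. -/

import Mathlib

open MeasureTheory Real intervalIntegral

/-- The modified Bessel function of the first kind,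
`I₀(x) = ∑ₖ (x/2)^(2k) / (k!)²`. -/
noncomputable def besselI0 (x : ℝ) : ℝ :=
  ∑' k : ℕ, (x / 2) ^ (2 * k) / (Nat.factorial k : ℝ) ^ 2

lemma wallis_cos (k : ℕ) :
    ∫ θ in (0:ℝ)..(π/2), Real.cos θ ^ (2*k)
      = (π/2) * (Nat.factorial (2*k) : ℝ) / (4^k * (Nat.factorial k : ℝ)^2) := by
  induction k with
  | zero => simp
  | succ k ih =>
    have h : 2 * (k+1) = 2*k + 2 := by ring
    rw [h, integral_cos_pow]
    rw [Real.cos_pi_div_two, Real.sin_zero]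
    have hk2 : ((2*k : ℕ) : ℝ) = 2*(k:ℝ) := by push_cast; ring
    rw [ih]
    have hfac1 : (Nat.factorial (2*k+2) : ℝ)
        = (2*(k:ℝ)+2) * (2*(k:ℝ)+1) * (Nat.factorial (2*k) : ℝ) := by
      rw [show 2*k+2 = (2*k+1) + 1 from rfl, Nat.factorial_succ, Nat.factorial_succ]
      push_cast; ring
    have hfac2 : (Nat.factorial (k+1) : ℝ) = ((k:ℝ)+1) * (Nat.factorial k : ℝ) := by
      rw [Nat.factorial_succ]; push_cast; ring
    have hf : (0:ℝ) < (Nat.factorial k : ℝ) := by positivity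
    have h4 : (0:ℝ) < 4^k := by positivity
    rw [hfac1, hfac2, hk2, Real.sin_pi_div_two]
    rw [zero_pow (by omega), pow_succ]
    field_simp
    ring

lemma besselI0_rep (x : ℝ) :
    besselI0 x = (2/π) * ∫ θ in (0:ℝ)..(π/2), Real.cosh (x * Real.cos θ) := by
  have hpi : (0:ℝ) < π/2 := by positivity
  set F : ℕ → ℝ → ℝ := fun k θ => (x * Real.cos θ)^(2*k) / (Nat.factorial (2*k) : ℝ) with hF
  have hFcont : ∀ k, Continuous (F k) := by
    intro k; simp only [hF]; fun_prop
  have hint : ∀ k, IntegrableOn (F k) (Set.Ioc (0:ℝ) (π/2)) volume := by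
    intro k
    exact (hFcont k).integrableOn_Ioc
  have hswap : ∫ θ in Set.Ioc (0:ℝ) (π/2), (∑' k, F k θ)
      = ∑' k, ∫ θ in Set.Ioc (0:ℝ) (π/2), F k θ := by
    refine (MeasureTheory.integral_tsum_of_summable_integral_norm hint ?_).symm
    have hb : ∀ k, ∫ θ in Set.Ioc (0:ℝ) (π/2), ‖F k θ‖
        ≤ (π/2) * (|x|^(2*k) / (Nat.factorial (2*k) : ℝ)) := by
      intro k
      have hle : ∀ θ ∈ Set.Ioc (0:ℝ) (π/2), ‖F k θ‖ ≤ |x|^(2*k) / (Nat.factorial (2*k) : ℝ) := by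
        intro θ _
        simp only [hF, norm_div, norm_pow, Real.norm_eq_abs, abs_mul]
        rw [abs_of_nonneg (by positivity : (0:ℝ) ≤ (Nat.factorial (2*k) : ℝ))]
        refine div_le_div_of_nonneg_right ?_ ?_ |>.trans_eq rfl
        swap
        · positivity
        refine pow_le_pow_left₀ (by positivity) ?_ _
        calc |x| * |Real.cos θ| ≤ |x| * 1 := by
              gcongr; exact Real.abs_cos_le_one θ
          _ = |x| := mul_one _
      calc ∫ θ in Set.Ioc (0:ℝ) (π/2), ‖F k θ‖
          ≤ ∫ _θ in Set.Ioc (0:ℝ) (π/2), (|x|^(2*k) / (Nat.factorial (2*k) : ℝ)) := by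
            refine MeasureTheory.setIntegral_mono_on (hint k).norm
              (integrableOn_const (by simp [hpi.le])) measurableSet_Ioc hle
        _ = (π/2) * (|x|^(2*k) / (Nat.factorial (2*k) : ℝ)) := by
            rw [MeasureTheory.setIntegral_const]
            simp [Real.volume_Ioc, hpi.le, ENNReal.toReal_ofReal, smul_eq_mul]
    have hs : Summable (fun k => (π/2) * (|x|^(2*k) / (Nat.factorial (2*k) : ℝ))) :=
      ((Real.hasSum_cosh |x|).summable).mul_left _
    exact hs.of_nonneg_of_le (fun k => MeasureTheory.integral_nonneg (fun θ => norm_nonneg _)) hb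
  have hptw : ∀ θ : ℝ, (∑' k, F k θ) = Real.cosh (x * Real.cos θ) := by
    intro θ
    exact ((Real.hasSum_cosh (x * Real.cos θ)).tsum_eq)
  have hik : ∀ k, ∫ θ in (0:ℝ)..(π/2), F k θ
      = x^(2*k) / (Nat.factorial (2*k) : ℝ)
        * ((π/2) * (Nat.factorial (2*k) : ℝ) / (4^k * (Nat.factorial k : ℝ)^2)) := by
    intro k
    have : ∀ θ : ℝ, F k θ = (x^(2*k) / (Nat.factorial (2*k) : ℝ)) * Real.cos θ ^ (2*k) := by
      intro θ; simp only [hF, mul_pow]; ring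
    rw [intervalIntegral.integral_congr (fun θ _ => this θ),
      intervalIntegral.integral_const_mul, wallis_cos]
  have hIcc : ∫ θ in (0:ℝ)..(π/2), Real.cosh (x * Real.cos θ)
      = ∑' k, ∫ θ in (0:ℝ)..(π/2), F k θ := by
    rw [intervalIntegral.integral_of_le hpi.le]
    have : ∀ θ, Real.cosh (x * Real.cos θ) = ∑' k, F k θ := fun θ => (hptw θ).symm
    rw [MeasureTheory.setIntegral_congr_fun measurableSet_Ioc (fun θ _ => this θ), hswap]
    refine tsum_congr fun k => ?_
    rw [intervalIntegral.integral_of_le hpi.le]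
  rw [hIcc, ← tsum_mul_left]
  refine tsum_congr fun k => ?_
  rw [hik k]
  have hf : (0:ℝ) < (Nat.factorial k : ℝ) := by positivity
  have hfk : (0:ℝ) < (Nat.factorial (2*k) : ℝ) := by positivity
  have h4 : (0:ℝ) < 4^k := by positivity
  have hx2 : (x/2)^(2*k) = x^(2*k) / 4^k := by
    rw [div_pow, show (2:ℝ)^(2*k) = 4^k by rw [pow_mul]; norm_num]
  rw [hx2]
  field_simp

lemma chunk_lemma {g : ℝ → ℝ} (hg : Continuous g) {A B : ℝ} (hA : 0 < A) (hAB : A ≤ B)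
    (mono : ∀ ⦃θ₁ θ₂ : ℝ⦄, 0 ≤ θ₁ → θ₁ ≤ θ₂ → θ₂ ≤ B → g θ₂ ≤ g θ₁) :
    (A/B) * ∫ θ in (0:ℝ)..B, g θ ≤ ∫ θ in (0:ℝ)..A, g θ := by
  have hB : 0 < B := hA.trans_le hAB
  have h3 : (∫ θ in (0:ℝ)..A, g θ) + ∫ θ in A..B, g θ = ∫ θ in (0:ℝ)..B, g θ :=
    intervalIntegral.integral_add_adjacent_intervals (hg.intervalIntegrable _ _)
      (hg.intervalIntegrable _ _)
  have h1 : ∫ θ in A..B, g θ ≤ (B - A) * g A := by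
    have := intervalIntegral.integral_mono_on hAB (hg.intervalIntegrable A B)
      (intervalIntegrable_const (μ := volume)) (fun θ hθ => mono hA.le hθ.1 hθ.2 : ∀ θ ∈ Set.Icc A B, g θ ≤ g A)
    simpa [smul_eq_mul] using this
  have h2 : A * g A ≤ ∫ θ in (0:ℝ)..A, g θ := by
    have := intervalIntegral.integral_mono_on hA.le (intervalIntegrable_const (μ := volume))
      (hg.intervalIntegrable 0 A) (fun θ hθ => mono hθ.1 hθ.2 hAB : ∀ θ ∈ Set.Icc 0 A, g A ≤ g θ)
    simpa [smul_eq_mul] using this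
  rw [div_mul_eq_mul_div, div_le_iff₀ hB, ← h3]
  nlinarith [h1, h2]

lemma cosh_add_le (a b : ℝ) (hb : 0 ≤ b) : Real.cosh (a + b) ≤ Real.exp b * Real.cosh a := by
  rw [Real.cosh_eq, Real.cosh_eq]
  have h1 : Real.exp (-(a+b)) ≤ Real.exp (b - a) := Real.exp_le_exp.2 (by linarith)
  have h2 : Real.exp b * Real.exp a = Real.exp (a + b) := by rw [← Real.exp_add]; ring_nf
  have h3 : Real.exp b * Real.exp (-a) = Real.exp (b - a) := by rw [← Real.exp_add]; ring_nf
  calc (Real.exp (a+b) + Real.exp (-(a+b)))/2 ≤ (Real.exp (a+b) + Real.exp (b-a))/2 := by linarith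
    _ = Real.exp b * ((Real.exp a + Real.exp (-a))/2) := by rw [← h2, ← h3]; ring

lemma besselI0_upper {x u : ℝ} (hu : 0 ≤ u) :
    besselI0 (x + u) ≤ Real.exp u * besselI0 x := by
  rw [besselI0_rep, besselI0_rep, ← mul_assoc, mul_comm (Real.exp u) (2/π), mul_assoc]
  have hpi : (0:ℝ) < π := Real.pi_pos
  gcongr
  rw [← intervalIntegral.integral_const_mul]
  refine intervalIntegral.integral_mono_on (by positivity)
    ((Real.continuous_cosh.comp (by fun_prop)).intervalIntegrable _ _)
    ((Real.continuous_exp.comp continuous_const |>.mul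
      (Real.continuous_cosh.comp (by fun_prop))).intervalIntegrable _ _) ?_
  intro θ hθ
  have hc0 : 0 ≤ Real.cos θ := Real.cos_nonneg_of_mem_Icc ⟨by linarith [hθ.1, hpi], hθ.2⟩
  have hc1 : Real.cos θ ≤ 1 := Real.cos_le_one θ
  have huc : 0 ≤ u * Real.cos θ := mul_nonneg hu hc0
  calc Real.cosh ((x + u) * Real.cos θ)
      = Real.cosh (x * Real.cos θ + u * Real.cos θ) := by ring_nf
    _ ≤ Real.exp (u * Real.cos θ) * Real.cosh (x * Real.cos θ) := cosh_add_le _ _ huc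
    _ ≤ Real.exp u * Real.cosh (x * Real.cos θ) := by
        gcongr
        nlinarith

lemma one_le_besselI0 (x : ℝ) : 1 ≤ besselI0 x := by
  rw [besselI0_rep]
  have hpi : (0:ℝ) < π := Real.pi_pos
  have h : ∫ θ in (0:ℝ)..(π/2), (1:ℝ) ≤ ∫ θ in (0:ℝ)..(π/2), Real.cosh (x * Real.cos θ) := by
    refine intervalIntegral.integral_mono_on (by positivity)
      (intervalIntegrable_const (μ := volume))
      ((Real.continuous_cosh.comp (by fun_prop)).intervalIntegrable _ _)
      (fun θ _ => Real.one_le_cosh _)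
  have h1 : ∫ θ in (0:ℝ)..(π/2), (1:ℝ) = π/2 := by simp
  rw [h1] at h
  calc (1:ℝ) = (2/π) * (π/2) := by field_simp
    _ ≤ (2/π) * ∫ θ in (0:ℝ)..(π/2), Real.cosh (x * Real.cos θ) := by gcongr

lemma besselI0_pos (x : ℝ) : 0 < besselI0 x := lt_of_lt_of_le one_pos (one_le_besselI0 x)

lemma besselI0_lower {x u s : ℝ} (hx : 0 ≤ x) (hu : 0 ≤ u) (hs0 : 0 < s) (hs1 : s < 1) :
    (Real.arccos s / π) * (Real.exp (s*u) * besselI0 x) ≤ besselI0 (x+u) := by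
  have hpi : (0:ℝ) < π := Real.pi_pos
  set θ₀ := Real.arccos s with hθ₀
  have hθ0 : 0 < θ₀ := Real.arccos_pos.2 hs1
  have hθπ : θ₀ ≤ π/2 := Real.arccos_le_pi_div_two.2 hs0.le
  have hcos : Real.cos θ₀ = s := Real.cos_arccos (by linarith) hs1.le
  have hcont1 : Continuous fun θ => Real.cosh ((x+u) * Real.cos θ) :=
    Real.continuous_cosh.comp (by fun_prop)
  have hcont2 : Continuous fun θ => Real.cosh (x * Real.cos θ) :=
    Real.continuous_cosh.comp (by fun_prop)
  -- step A
  have hA : ∫ θ in (0:ℝ)..θ₀, Real.cosh ((x+u) * Real.cos θ)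
      ≤ ∫ θ in (0:ℝ)..(π/2), Real.cosh ((x+u) * Real.cos θ) := by
    rw [← intervalIntegral.integral_add_adjacent_intervals
      (hcont1.intervalIntegrable 0 θ₀) (hcont1.intervalIntegrable θ₀ (π/2))]
    have : 0 ≤ ∫ θ in θ₀..(π/2), Real.cosh ((x+u) * Real.cos θ) :=
      intervalIntegral.integral_nonneg hθπ (fun θ _ => (Real.cosh_pos _).le)
    linarith
  -- step B+C
  have hBC : Real.exp (s*u) / 2 * ∫ θ in (0:ℝ)..θ₀, Real.cosh (x * Real.cos θ)
      ≤ ∫ θ in (0:ℝ)..θ₀, Real.cosh ((x+u) * Real.cos θ) := by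
    rw [← intervalIntegral.integral_const_mul]
    refine intervalIntegral.integral_mono_on hθ0.le
      ((continuous_const.mul hcont2).intervalIntegrable _ _)
      (hcont1.intervalIntegrable _ _) ?_
    intro θ hθ
    have hθπ2 : θ ≤ π/2 := hθ.2.trans hθπ
    have hc0 : 0 ≤ Real.cos θ := Real.cos_nonneg_of_mem_Icc ⟨by linarith [hθ.1], hθπ2⟩
    have hcs : s ≤ Real.cos θ := by
      rw [← hcos]
      exact Real.cos_le_cos_of_nonneg_of_le_pi hθ.1 (by linarith) hθ.2
    have hxc : 0 ≤ x * Real.cos θ := mul_nonneg hx hc0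
    have h1 : Real.cosh (x * Real.cos θ) ≤ Real.exp (x * Real.cos θ) := by
      have := Real.sinh_nonneg_iff.2 hxc
      rw [Real.cosh_eq, Real.sinh_eq] at *
      linarith
    have h2 : s * u ≤ u * Real.cos θ := by nlinarith
    have h3 : Real.exp ((x+u) * Real.cos θ) / 2 ≤ Real.cosh ((x+u) * Real.cos θ) := by
      rw [Real.cosh_eq]
      have := Real.exp_pos (-((x+u) * Real.cos θ))
      linarith
    calc Real.exp (s*u) / 2 * Real.cosh (x * Real.cos θ)
        ≤ Real.exp (u * Real.cos θ) / 2 * Real.exp (x * Real.cos θ) := by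
          have e1 : Real.exp (s*u) ≤ Real.exp (u * Real.cos θ) := Real.exp_le_exp.2 h2
          have e2 := (Real.cosh_pos (x * Real.cos θ)).le
          have e3 := (Real.exp_pos (s*u)).le
          nlinarith [Real.exp_pos (u * Real.cos θ)]
      _ = Real.exp ((x+u) * Real.cos θ) / 2 := by
          rw [div_mul_eq_mul_div, ← Real.exp_add]; ring_nf
      _ ≤ Real.cosh ((x+u) * Real.cos θ) := h3
  -- step D
  have hD : (θ₀ / (π/2)) * ∫ θ in (0:ℝ)..(π/2), Real.cosh (x * Real.cos θ)
      ≤ ∫ θ in (0:ℝ)..θ₀, Real.cosh (x * Real.cos θ) := by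
    refine chunk_lemma hcont2 hθ0 hθπ ?_
    intro θ₁ θ₂ h01 h12 h2π
    refine Real.cosh_le_cosh.2 ?_
    have hc2 : 0 ≤ Real.cos θ₂ := Real.cos_nonneg_of_mem_Icc ⟨by linarith, h2π⟩
    have hcc : Real.cos θ₂ ≤ Real.cos θ₁ :=
      Real.cos_le_cos_of_nonneg_of_le_pi h01 (by linarith) h12
    rw [abs_of_nonneg (mul_nonneg hx hc2), abs_of_nonneg (mul_nonneg hx (hc2.trans hcc))]
    exact mul_le_mul_of_nonneg_left hcc hx
  rw [besselI0_rep x, besselI0_rep (x+u)]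
  have hJx : 0 ≤ ∫ θ in (0:ℝ)..(π/2), Real.cosh (x * Real.cos θ) :=
    intervalIntegral.integral_nonneg (by positivity) (fun θ _ => (Real.cosh_pos _).le)
  have hexp := (Real.exp_pos (s*u)).le
  calc θ₀/π * (Real.exp (s*u) * ((2/π) * ∫ θ in (0:ℝ)..(π/2), Real.cosh (x * Real.cos θ)))
      = (Real.exp (s*u) / 2 * ((θ₀/(π/2)) * ∫ θ in (0:ℝ)..(π/2), Real.cosh (x * Real.cos θ)))
          * (2/π) := by ring
    _ ≤ (Real.exp (s*u) / 2 * ∫ θ in (0:ℝ)..θ₀, Real.cosh (x * Real.cos θ)) * (2/π) := by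
        have h2pi : (0:ℝ) ≤ 2/π := by positivity
        exact mul_le_mul_of_nonneg_right (mul_le_mul_of_nonneg_left hD (by positivity)) h2pi
    _ ≤ (∫ θ in (0:ℝ)..θ₀, Real.cosh ((x+u) * Real.cos θ)) * (2/π) :=
        mul_le_mul_of_nonneg_right hBC (by positivity)
    _ ≤ (∫ θ in (0:ℝ)..(π/2), Real.cosh ((x+u) * Real.cos θ)) * (2/π) :=
        mul_le_mul_of_nonneg_right hA (by positivity)
    _ = 2/π * ∫ θ in (0:ℝ)..(π/2), Real.cosh ((x+u) * Real.cos θ) := by ring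

/-- with `ρ(z) = R − |z|`:
(i) for `0 < γ̃ < γ` there is `C = C(γ, γ̃) > 0` with
`e^{−γρ(z)} ≤ C · I₀(γ̃|z|)/I₀(γ̃R)` whenever `|z| ≤ R`;
(ii) for `0 < γ < γ̃` there is `C' = C'(γ, γ̃) > 0` with
`I₀(γ̃|z|)/I₀(γ̃R) ≤ C' · e^{−γρ(z)}` whenever `|z| ≤ R`. -/
theorem statement4 :
    (∀ γ γt : ℝ, 0 < γt → γt < γ →
      ∃ C > (0 : ℝ), ∀ R : ℝ, 0 < R → ∀ z : ℂ, ‖z‖ ≤ R →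
        Real.exp (-γ * (R - ‖z‖))
          ≤ C * (besselI0 (γt * ‖z‖) / besselI0 (γt * R))) ∧
    (∀ γ γt : ℝ, 0 < γ → γ < γt →
      ∃ C' > (0 : ℝ), ∀ R : ℝ, 0 < R → ∀ z : ℂ, ‖z‖ ≤ R →
        besselI0 (γt * ‖z‖) / besselI0 (γt * R)
          ≤ C' * Real.exp (-γ * (R - ‖z‖))) := by
  constructor
  · intro γ γt hγt h
    refine ⟨1, one_pos, ?_⟩
    intro R hR z hz
    set r := ‖z‖ with hrdef
    have hr0 : 0 ≤ r := norm_nonneg z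
    have hu : 0 ≤ γt * (R - r) := by nlinarith
    have hup := besselI0_upper (x := γt * r) hu
    rw [show γt * r + γt * (R - r) = γt * R by ring] at hup
    rw [one_mul, le_div_iff₀ (besselI0_pos (γt * R))]
    calc Real.exp (-γ * (R - r)) * besselI0 (γt * R)
        ≤ Real.exp (-γ * (R - r)) * (Real.exp (γt * (R - r)) * besselI0 (γt * r)) :=
          mul_le_mul_of_nonneg_left hup (Real.exp_pos _).le
      _ = Real.exp (-γ * (R - r) + γt * (R - r)) * besselI0 (γt * r) := by
          rw [Real.exp_add]; ring
      _ ≤ 1 * besselI0 (γt * r) := by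
          refine mul_le_mul_of_nonneg_right ?_ (besselI0_pos _).le
          rw [Real.exp_le_one_iff]
          nlinarith
      _ = besselI0 (γt * r) := one_mul _
  · intro γ γt hγ h
    have hγt : 0 < γt := hγ.trans h
    set s := γ / γt with hsdef
    have hs0 : 0 < s := div_pos hγ hγt
    have hs1 : s < 1 := (div_lt_one hγt).2 h
    set θ₀ := Real.arccos s with hθ₀def
    have hθ0 : 0 < θ₀ := Real.arccos_pos.2 hs1
    refine ⟨π / θ₀, div_pos Real.pi_pos hθ0, ?_⟩
    intro R hR z hz
    set r := ‖z‖ with hrdef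
    have hr0 : 0 ≤ r := norm_nonneg z
    have hx : 0 ≤ γt * r := by positivity
    have hu : 0 ≤ γt * (R - r) := by nlinarith
    have hl := besselI0_lower hx hu hs0 hs1
    rw [show γt * r + γt * (R - r) = γt * R by ring,
      show s * (γt * (R - r)) = γ * (R - r) by rw [hsdef]; field_simp] at hl
    rw [div_le_iff₀ (besselI0_pos (γt * R))]
    have hexpne : Real.exp (γ * (R - r)) ≠ 0 := (Real.exp_pos _).ne'
    have key : π / θ₀ * Real.exp (-γ * (R - r))
        * (θ₀ / π * (Real.exp (γ * (R - r)) * besselI0 (γt * r))) = besselI0 (γt * r) := by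
      rw [show -γ * (R - r) = -(γ * (R - r)) by ring, Real.exp_neg]
      field_simp
    calc besselI0 (γt * r)
        = π / θ₀ * Real.exp (-γ * (R - r))
            * (θ₀ / π * (Real.exp (γ * (R - r)) * besselI0 (γt * r))) := key.symm
      _ ≤ π / θ₀ * Real.exp (-γ * (R - r)) * besselI0 (γt * R) :=
          mul_le_mul_of_nonneg_left hl (by positivity)
      _ = π / θ₀ * Real.exp (-γ * (R - r)) * besselI0 (γt * R) := rfl
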